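/- For every d ≥ 0 there is an equivalence of categories OI(d) ≃ OI^{d+1}, given on objects by sending (S, λ) to the tuple (S_1, …, S_{d+1}), where S_i = {x ∈ S : λ_{i-1} < x < λ_i} (with the conventions λ_0 < x and x < λ_{d+1} for all x ∈ S). -/

import Mathlib

open CategoryTheory

universe u

/-- The (skeletal model of the) category `OI` of finite totally ordered sets and
order-preserving injections: the object `n` represents `[n] = {1, …, n}`, and a
morphism `n ⟶ m` is an order-preserving injection `Fin n ↪o Fin m`. -/
def OI : Type := ℕ

namespace OI

/-- Build an object of `OI` from a natural number. -/
def mk (n : ℕ) : OI := n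

/-- The underlying natural number of an object of `OI`. -/
def len (n : OI) : ℕ := n

instance : Category OI where
  Hom n m := Fin n.len ↪o Fin m.len
  id _ := RelEmbedding.refl _
  comp f g := f.trans g
  id_comp _ := rfl
  comp_id _ := rfl
  assoc _ _ _ := rfl

/-- The order embedding underlying a morphism of `OI`. -/
def emb {n m : OI} (f : n ⟶ m) : Fin n.len ↪o Fin m.len := f

@[ext]
theorem hom_ext {n m : OI} (f g : n ⟶ m) (h : ∀ i, emb f i = emb g i) : f = g :=
  RelEmbedding.ext h

end OI

/-- A module over a category `C` (a functor `C ⥤ Mod_k`) is finitely generated if there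
are finitely many elements `mᵢ ∈ M xᵢ` whose images under all morphisms span every `M y`;
equivalently, `M` is a quotient of a finite direct sum of principal projectives. -/
def CatModule.FG {C : Type*} [Category C] {k : Type u} [CommRing k]
    (M : C ⥤ ModuleCat.{u} k) : Prop :=
  ∃ (r : ℕ) (x : Fin r → C) (m : ∀ i, M.obj (x i)),
    ∀ y : C, Submodule.span k
      {v : M.obj y | ∃ (i : Fin r) (f : x i ⟶ y), M.map f (m i) = v} = ⊤

/-- The category `OI(d)`: objects are pairs `(S, λ)` of a finite totally ordered set
(modelled skeletally by `Fin n`) with an increasing `d`-tuple `λ` in it; morphisms are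
order-preserving injections carrying the marked tuple of the source to that of the
target. -/
structure OId (d : ℕ) : Type where
  len : ℕ
  lam : Fin d ↪o Fin len

namespace OId

variable {d : ℕ}

instance : Category (OId d) where
  Hom X Y := { f : Fin X.len ↪o Fin Y.len // ∀ i, f (X.lam i) = Y.lam i }
  id X := ⟨RelEmbedding.refl _, fun _ => rfl⟩
  comp f g := ⟨f.1.trans g.1, fun i => by
    simp only [RelEmbedding.trans_apply, f.2, g.2]⟩
  id_comp _ := rfl
  comp_id _ := rfl
  assoc _ _ _ := rfl

/-- The order embedding underlying a morphism of `OI(d)`. -/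
def emb {X Y : OId d} (f : X ⟶ Y) : Fin X.len ↪o Fin Y.len :=
  (f : { f : Fin X.len ↪o Fin Y.len // ∀ i, f (X.lam i) = Y.lam i }).1

@[ext]
theorem hom_ext {X Y : OId d} (f g : X ⟶ Y) (h : ∀ i, emb f i = emb g i) : f = g :=
  Subtype.ext (RelEmbedding.ext h)

/-- The forgetful functor `Φ : OI(d) ⥤ OI`, `(S, λ) ↦ S`. -/
def forget (d : ℕ) : OId d ⥤ OI where
  obj X := OI.mk X.len
  map f := OId.emb f
  map_id _ := rfl
  map_comp _ _ := rfl

end OId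

namespace OIdP

open Sum CategoryTheory

variable {d : ℕ}

/-- Number of marked points immediately after gap `i`: one unless `i` is the last gap. -/
def mk1 (d : ℕ) (i : Fin (d + 1)) : ℕ := if (i : ℕ) < d then 1 else 0

lemma mk1_pos {i : Fin (d + 1)} (h : (i : ℕ) < d) : 0 < mk1 d i := by
  simp only [mk1, if_pos h]; omega

/-- The model: `d+1` gaps of sizes `n i`, with a marked point after each gap except the last. -/
abbrev A (d : ℕ) (n : Fin (d + 1) → ℕ) : Type :=
  Σₗ i : Fin (d + 1), (Fin (n i) ⊕ₗ Fin (mk1 d i))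

variable {n m : Fin (d + 1) → ℕ}

lemma lt_of_mk1 {i : Fin (d + 1)} (z : Fin (mk1 d i)) : (i : ℕ) < d := by
  by_contra h
  have := z.2
  simp only [mk1, if_neg h] at this
  omega

/-- The `j`-th marked point of the model. -/
def mrk (n : Fin (d + 1) → ℕ) (j : Fin d) : A d n :=
  ⟨j.castSucc, toLex (Sum.inr ⟨0, mk1_pos (by simp)⟩)⟩

/-- The `k`-th element of the `i`-th gap of the model. -/
def gapEl (n : Fin (d + 1) → ℕ) (i : Fin (d + 1)) (k : Fin (n i)) : A d n :=
  ⟨i, toLex (Sum.inl k)⟩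

lemma mrk_lt_mrk {j j' : Fin d} : mrk n j < mrk n j' ↔ j < j' := by
  constructor
  · intro h
    rcases Sigma.Lex.lt_def.mp h with h | ⟨h1, h2⟩
    · exact Fin.castSucc_lt_castSucc_iff.mp h
    · exfalso
      have hj : j = j' := Fin.castSucc_injective d h1
      subst hj
      exact absurd h2 (lt_irrefl _)
  · intro h
    exact Sigma.Lex.lt_def.mpr (Or.inl (Fin.castSucc_lt_castSucc_iff.mpr h))

lemma gapEl_lt_gapEl {i : Fin (d + 1)} {k k' : Fin (n i)} :
    gapEl n i k < gapEl n i k' ↔ k < k' := by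
  constructor
  · intro h
    rcases Sigma.Lex.lt_def.mp h with h | ⟨h1, h2⟩
    · exact absurd h (lt_irrefl _)
    · exact Sum.Lex.inl_lt_inl_iff.mp h2
  · intro h
    exact Sigma.Lex.lt_def.mpr (Or.inr ⟨rfl, Sum.Lex.inl_lt_inl_iff.mpr h⟩)

lemma gapEl_lt_mrk {i : Fin (d + 1)} {k : Fin (n i)} {j : Fin d} :
    gapEl n i k < mrk n j ↔ (i : ℕ) ≤ (j : ℕ) := by
  constructor
  · intro h
    rcases Sigma.Lex.lt_def.mp h with h | ⟨h1, _⟩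
    · have : (i : ℕ) < (j.castSucc : ℕ) := h
      simpa using Nat.le_of_lt_succ (Nat.lt_succ_of_lt this)
    · have : (i : ℕ) = (j.castSucc : ℕ) := congrArg Fin.val h1
      simp at this
      omega
  · intro h
    rcases Nat.lt_or_ge (i : ℕ) (j : ℕ) with h' | h'
    · refine Sigma.Lex.lt_def.mpr (Or.inl ?_)
      show i < j.castSucc
      rw [Fin.lt_def]
      simpa using h'
    · have hieq : i = j.castSucc := Fin.ext (by simp; omega)
      refine Sigma.Lex.lt_def.mpr (Or.inr ⟨hieq, ?_⟩)
      subst hieq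
      exact Sum.Lex.inl_lt_inr _ _

lemma mrk_lt_gapEl {i : Fin (d + 1)} {k : Fin (n i)} {j : Fin d} :
    mrk n j < gapEl n i k ↔ (j : ℕ) < (i : ℕ) := by
  constructor
  · intro h
    rcases Sigma.Lex.lt_def.mp h with h | ⟨h1, h2⟩
    · have : (j.castSucc : ℕ) < (i : ℕ) := h
      simpa using this
    · exfalso
      have hieq : i = j.castSucc := h1.symm
      subst hieq
      exact Sum.Lex.not_inr_lt_inl h2
  · intro h
    refine Sigma.Lex.lt_def.mpr (Or.inl ?_)
    show j.castSucc < i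
    rw [Fin.lt_def]
    simpa using h

lemma gapEl_inj {i : Fin (d + 1)} {k k' : Fin (n i)} (h : gapEl n i k = gapEl n i k') :
    k = k' := by
  by_contra hne
  rcases lt_or_gt_of_ne hne with hlt | hlt
  · exact absurd (h ▸ gapEl_lt_gapEl.mpr hlt) (lt_irrefl _)
  · exact absurd (h ▸ gapEl_lt_gapEl.mpr hlt) (lt_irrefl _)

/-- Every element of the model is a marked point or a gap element. -/
lemma A_cases (a : A d n) : (∃ j : Fin d, a = mrk n j) ∨ ∃ i k, a = gapEl n i k := by
  rcases a with ⟨i, u⟩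
  rcases u with k | z
  · exact Or.inr ⟨i, k, rfl⟩
  · left
    have hd : (i : ℕ) < d := lt_of_mk1 z
    refine ⟨⟨(i : ℕ), hd⟩, ?_⟩
    have hz0 : (z : ℕ) = 0 := by
      have := z.2
      simp only [mk1, if_pos hd] at this
      omega
    have hz : z = ⟨0, mk1_pos hd⟩ := Fin.ext hz0
    subst hz
    rfl

/-- An element of the model lying strictly between the `(i-1)`-st and `i`-th marked points
is an element of the `i`-th gap. -/
lemma mem_gap {a : A d n} {i : Fin (d + 1)}
    (h1 : ∀ j : Fin d, (j : ℕ) < (i : ℕ) → mrk n j < a)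
    (h2 : ∀ j : Fin d, (i : ℕ) ≤ (j : ℕ) → a < mrk n j) :
    ∃ k, a = gapEl n i k := by
  rcases A_cases a with ⟨j, rfl⟩ | ⟨i', k, rfl⟩
  · exfalso
    rcases Nat.lt_or_ge (j : ℕ) (i : ℕ) with h | h
    · exact absurd (h1 j h) (lt_irrefl _)
    · exact absurd (h2 j h) (lt_irrefl _)
  · have hii : i' = i := by
      apply Fin.ext
      have hle : (i : ℕ) ≤ (i' : ℕ) := by
        by_contra hc
        push_neg at hc
        have hd : (i' : ℕ) < d := lt_of_lt_of_le hc (Nat.lt_succ_iff.mp i.2)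
        have h := mrk_lt_gapEl.mp (h1 ⟨(i' : ℕ), hd⟩ hc)
        simp at h
      rcases Nat.lt_or_ge (i : ℕ) (i' : ℕ) with hc | hc
      · exfalso
        have hd : (i : ℕ) < d := lt_of_lt_of_le hc (Nat.lt_succ_iff.mp i'.2)
        have h := gapEl_lt_mrk.mp (h2 ⟨(i : ℕ), hd⟩ (le_refl _))
        simp at h
        omega
      · omega
    subst hii
    exact ⟨k, rfl⟩

end OIdP

namespace OIdP

variable {d : ℕ} {n m : Fin (d + 1) → ℕ}

/-- The canonical order isomorphism enumerating the model. -/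
noncomputable def isoA (n : Fin (d + 1) → ℕ) : Fin (Fintype.card (A d n)) ≃o A d n :=
  monoEquivOfFin _ rfl

/-- The object of `OId d` built from a tuple of gap sizes. -/
noncomputable def Gobj (d : ℕ) (n : Fin (d + 1) → ℕ) : OId d where
  len := Fintype.card (A d n)
  lam := OrderEmbedding.ofStrictMono (fun j => (isoA n).symm (mrk n j))
    (fun _ _ h => (isoA n).symm.strictMono (mrk_lt_mrk.mpr h))

/-- The action of a tuple of order embeddings on the model. -/
def Amap (f : ∀ i, Fin (n i) ↪o Fin (m i)) : A d n → A d m :=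
  fun a => ⟨a.1, toLex (Sum.map (f a.1) id (ofLex a.2))⟩

lemma Amap_mrk (f : ∀ i, Fin (n i) ↪o Fin (m i)) (j : Fin d) :
    Amap f (mrk n j) = mrk m j := rfl

lemma Amap_gapEl (f : ∀ i, Fin (n i) ↪o Fin (m i)) (i : Fin (d + 1)) (k : Fin (n i)) :
    Amap f (gapEl n i k) = gapEl m i (f i k) := rfl

lemma mk1_le_one {i : Fin (d + 1)} : mk1 d i ≤ 1 := by
  unfold mk1; split <;> omega

lemma Amap_strictMono (f : ∀ i, Fin (n i) ↪o Fin (m i)) : StrictMono (Amap f) := by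
  intro a b h
  rcases a with ⟨i, u⟩
  rcases b with ⟨i', v⟩
  rcases Sigma.Lex.lt_def.mp h with h | ⟨h1, h2⟩
  · exact Sigma.Lex.lt_def.mpr (Or.inl h)
  · have h1' : i = i' := h1
    subst h1'
    refine Sigma.Lex.lt_def.mpr (Or.inr ⟨rfl, ?_⟩)
    rcases u with k | z <;> rcases v with k' | z'
    · exact Sum.Lex.inl_lt_inl_iff.mpr ((f i).strictMono (Sum.Lex.inl_lt_inl_iff.mp h2))
    · exact Sum.Lex.inl_lt_inr _ _
    · exact absurd h2 Sum.Lex.not_inr_lt_inl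
    · exact Sum.Lex.inr_lt_inr_iff.mpr (Sum.Lex.inr_lt_inr_iff.mp h2)

/-- Interpret a tuple of `OI` objects as a tuple of naturals. -/
def lenF (n : Fin (d + 1) → OI) : Fin (d + 1) → ℕ := fun i => OI.len (n i)

/-- The gluing functor `OI^{d+1} ⥤ OI(d)`. -/
noncomputable def G (d : ℕ) : (Fin (d + 1) → OI) ⥤ OId d where
  obj n := Gobj d (lenF n)
  map {n m} f := ⟨OrderEmbedding.ofStrictMono
      (fun x => (isoA (lenF m)).symm (Amap (fun i => OI.emb (f i)) (isoA (lenF n) x)))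
      (fun _ _ h => (isoA _).symm.strictMono (Amap_strictMono _ ((isoA _).strictMono h))),
    fun j => by
      show (isoA (lenF m)).symm (Amap _ (isoA (lenF n) ((isoA (lenF n)).symm (mrk _ j)))) = _
      erw [OrderIso.apply_symm_apply, Amap_mrk]
      rfl⟩
  map_id n := by
    apply OId.hom_ext
    intro x
    show (isoA (lenF n)).symm (Amap _ (isoA (lenF n) x)) = x
    have hA : Amap (d := d) (n := lenF n) (m := lenF n) (fun i => OI.emb (𝟙 n i)) = id := by
      funext a
      rcases a with ⟨i, k | z⟩ <;> rfl
    rw [hA]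
    simp
    exact (isoA (lenF n)).symm_apply_apply x
  map_comp {n m p} f g := by
    apply OId.hom_ext
    intro x
    show (isoA (lenF p)).symm (Amap _ (isoA (lenF n) x)) =
      (isoA (lenF p)).symm (Amap _ (isoA (lenF m) ((isoA (lenF m)).symm (Amap _ (isoA (lenF n) x)))))
    rw [OrderIso.apply_symm_apply]
    congr 1
    rcases (isoA (lenF n) x) with ⟨i, k | z⟩ <;> rfl

lemma lamG_lt_iff {x : Fin (Gobj d n).len} {j : Fin d} :
    (Gobj d n).lam j < x ↔ mrk n j < isoA n x := by
  constructor
  · intro h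
    have := (isoA n).strictMono h
    rwa [show (isoA n) ((Gobj d n).lam j) = mrk n j from (isoA n).apply_symm_apply _] at this
  · intro h
    have := (isoA n).symm.strictMono h
    erw [OrderIso.symm_apply_apply] at this; exact this

lemma lt_lamG_iff {x : Fin (Gobj d n).len} {j : Fin d} :
    x < (Gobj d n).lam j ↔ isoA n x < mrk n j := by
  constructor
  · intro h
    have := (isoA n).strictMono h
    rwa [show (isoA n) ((Gobj d n).lam j) = mrk n j from (isoA n).apply_symm_apply _] at this
  · intro h
    have := (isoA n).symm.strictMono h
    erw [OrderIso.symm_apply_apply] at this; exact this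

/-- The `i`-th gap of an object of `OId d`. -/
abbrev gapTy (X : OId d) (i : Fin (d + 1)) : Type :=
  { x : Fin X.len // (∀ j : Fin d, (j : ℕ) < (i : ℕ) → X.lam j < x) ∧
      (∀ j : Fin d, (i : ℕ) ≤ (j : ℕ) → x < X.lam j) }

lemma card_gap (n : Fin (d + 1) → ℕ) (i : Fin (d + 1)) :
    Fintype.card (gapTy (Gobj d n) i) = n i := by
  rw [← Fintype.card_fin (n i)]
  refine (Fintype.card_congr (Equiv.ofBijective ?_ ⟨?_, ?_⟩)).symm
  · exact fun k => ⟨(isoA n).symm (gapEl n i k),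
      fun j hj => lamG_lt_iff.mpr (by rw [OrderIso.apply_symm_apply]; exact mrk_lt_gapEl.mpr hj),
      fun j hj => lt_lamG_iff.mpr (by rw [OrderIso.apply_symm_apply]; exact gapEl_lt_mrk.mpr hj)⟩
  · intro k k' h
    exact gapEl_inj ((isoA n).symm.injective (congrArg Subtype.val h))
  · rintro ⟨x, hx1, hx2⟩
    obtain ⟨k, hk⟩ := mem_gap (a := isoA n x) (i := i)
      (fun j hj => lamG_lt_iff.mp (hx1 j hj)) (fun j hj => lt_lamG_iff.mp (hx2 j hj))
    exact ⟨k, Subtype.ext (by show (isoA n).symm (gapEl n i k) = x; rw [← hk]; exact (isoA n).symm_apply_apply x)⟩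

lemma card_gap_eq_of_iso {X Y : OId d} (c : X ≅ Y) (i : Fin (d + 1)) :
    Fintype.card (gapTy X i) = Fintype.card (gapTy Y i) := by
  apply Fintype.card_congr
  refine ⟨fun x => ⟨OId.emb c.hom x.1, ?_, ?_⟩, fun y => ⟨OId.emb c.inv y.1, ?_, ?_⟩, ?_, ?_⟩
  · intro j hj
    have := (OId.emb c.hom).strictMono (x.2.1 j hj)
    have h2 : OId.emb c.hom (X.lam j) = Y.lam j := c.hom.2 j
    rwa [h2] at this
  · intro j hj
    have := (OId.emb c.hom).strictMono (x.2.2 j hj)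
    have h2 : OId.emb c.hom (X.lam j) = Y.lam j := c.hom.2 j
    rwa [h2] at this
  · intro j hj
    have := (OId.emb c.inv).strictMono (y.2.1 j hj)
    have h2 : OId.emb c.inv (Y.lam j) = X.lam j := c.inv.2 j
    rwa [h2] at this
  · intro j hj
    have := (OId.emb c.inv).strictMono (y.2.2 j hj)
    have h2 : OId.emb c.inv (Y.lam j) = X.lam j := c.inv.2 j
    rwa [h2] at this
  · intro x
    apply Subtype.ext
    exact congrArg (fun (f : X ⟶ X) => OId.emb f x.1) c.hom_inv_id
  · intro y
    apply Subtype.ext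
    exact congrArg (fun (f : Y ⟶ Y) => OId.emb f y.1) c.inv_hom_id

end OIdP

namespace OIdP

variable {d : ℕ}

/-- The tuple of gap sizes of an object of `OId d`. -/
noncomputable def gapCard (X : OId d) : Fin (d + 1) → ℕ := fun i => Fintype.card (gapTy X i)

/-- Enumeration of the `i`-th gap of `X`. -/
noncomputable def gapIso (X : OId d) (i : Fin (d + 1)) :
    Fin (gapCard X i) ≃o gapTy X i := monoEquivOfFin _ rfl

/-- The comparison map from the model built on the gap sizes of `X` to `X`. -/
noncomputable def e0 (X : OId d) : A d (gapCard X) → Fin X.len :=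
  fun a => Sum.rec (motive := fun _ => Fin X.len)
    (fun k => ((gapIso X a.1) k).1)
    (fun z => X.lam ⟨(a.1 : ℕ), lt_of_mk1 z⟩) (ofLex a.2)

lemma e0_mrk (X : OId d) (j : Fin d) : e0 X (mrk (gapCard X) j) = X.lam j := rfl

lemma e0_strictMono (X : OId d) : StrictMono (e0 X) := by
  intro a b h
  rcases a with ⟨i, u⟩
  rcases b with ⟨i', v⟩
  rcases Sigma.Lex.lt_def.mp h with hii | ⟨h1, h2⟩
  · have hii' : (i : ℕ) < (i' : ℕ) := hii
    rcases u with k | z <;> rcases v with k' | z'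
    · have hd : (i : ℕ) < d := lt_of_lt_of_le hii' (Nat.lt_succ_iff.mp i'.2)
      have l1 : ((gapIso X i k) : Fin X.len) < X.lam ⟨(i : ℕ), hd⟩ :=
        ((gapIso X i k)).2.2 ⟨(i : ℕ), hd⟩ (le_refl _)
      have l2 : X.lam ⟨(i : ℕ), hd⟩ < ((gapIso X i' k') : Fin X.len) :=
        ((gapIso X i' k')).2.1 ⟨(i : ℕ), hd⟩ hii'
      exact lt_trans l1 l2
    · exact ((gapIso X i k)).2.2 ⟨(i' : ℕ), lt_of_mk1 z'⟩ (le_of_lt hii')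
    · exact ((gapIso X i' k')).2.1 ⟨(i : ℕ), lt_of_mk1 z⟩ hii'
    · exact X.lam.strictMono (show (⟨(i : ℕ), lt_of_mk1 z⟩ : Fin d) < ⟨(i' : ℕ), lt_of_mk1 z'⟩ from hii')
  · have h1' : i = i' := h1
    subst h1'
    rcases u with k | z <;> rcases v with k' | z'
    · exact Subtype.coe_lt_coe.mpr ((gapIso X i).strictMono (Sum.Lex.inl_lt_inl_iff.mp h2))
    · exact ((gapIso X i k)).2.2 ⟨(i : ℕ), lt_of_mk1 z'⟩ (le_refl _)
    · exact absurd h2 Sum.Lex.not_inr_lt_inl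
    · exfalso
      have h2' : toLex (Sum.inr z) < (toLex (Sum.inr z') :
          Fin (gapCard X i) ⊕ₗ Fin (mk1 d i)) := by exact h2
      have h3 := Sum.Lex.inr_lt_inr_iff.mp h2'
      have h3' : (z : ℕ) < (z' : ℕ) := h3
      have h4 := z'.2
      have h5 : mk1 d i ≤ 1 := mk1_le_one
      omega

lemma classify (X : OId d) (x : Fin X.len) :
    (∃ j, x = X.lam j) ∨ ∃ i : Fin (d + 1),
      (∀ j : Fin d, (j : ℕ) < (i : ℕ) → X.lam j < x) ∧
      (∀ j : Fin d, (i : ℕ) ≤ (j : ℕ) → x < X.lam j) := by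
  classical
  by_cases hx : ∃ j, x = X.lam j
  · exact Or.inl hx
  right
  push_neg at hx
  set s : Finset (Fin d) := Finset.univ.filter (fun j => X.lam j < x) with hs
  have hcard : s.card ≤ d := le_trans (Finset.card_filter_le _ _) (by simp)
  have key : ∀ j : Fin d, j ∈ s ↔ (j : ℕ) < s.card := by
    intro j
    constructor
    · intro hj
      have hsub : Finset.Iic j ⊆ s := by
        intro j' hj'
        simp only [Finset.mem_Iic] at hj'
        simp only [hs, Finset.mem_filter, Finset.mem_univ, true_and] at hj ⊢
        exact lt_of_le_of_lt (X.lam.monotone hj') hj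
      have := Finset.card_le_card hsub
      rw [Fin.card_Iic] at this
      omega
    · intro hj
      by_contra hjs
      have hsub : s ⊆ Finset.Iio j := by
        intro j' hj'
        simp only [Finset.mem_Iio]
        by_contra hge
        push_neg at hge
        apply hjs
        simp only [hs, Finset.mem_filter, Finset.mem_univ, true_and] at hj' ⊢
        exact lt_of_le_of_lt (X.lam.monotone hge) hj'
      have := Finset.card_le_card hsub
      rw [Fin.card_Iio] at this
      omega
  refine ⟨⟨s.card, Nat.lt_succ_of_le hcard⟩, ?_, ?_⟩
  · intro j hj
    have hm := (key j).mpr hj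
    simpa [hs] using hm
  · intro j hj
    have hns : j ∉ s := fun h => by have := (key j).mp h; simp only at hj; omega
    have hnlt : ¬ X.lam j < x := fun h => hns (by simp [hs, h])
    exact lt_of_le_of_ne (le_of_not_gt hnlt) (fun h => hx j h)

lemma e0_surj (X : OId d) : Function.Surjective (e0 X) := by
  intro x
  rcases classify X x with ⟨j, rfl⟩ | ⟨i, h1, h2⟩
  · exact ⟨mrk _ j, e0_mrk X j⟩
  · refine ⟨gapEl _ i ((gapIso X i).symm ⟨x, h1, h2⟩), ?_⟩
    show ((gapIso X i) ((gapIso X i).symm ⟨x, h1, h2⟩) : Fin X.len) = x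
    rw [OrderIso.apply_symm_apply]

/-- The comparison map as a map out of the glued object. -/
noncomputable def toX (X : OId d) : Fin (Gobj d (gapCard X)).len → Fin X.len :=
  fun x => e0 X (isoA (gapCard X) x)

lemma toX_strictMono (X : OId d) : StrictMono (toX X) :=
  fun _ _ h => (e0_strictMono X) ((isoA _).strictMono h)

lemma toX_surj (X : OId d) : Function.Surjective (toX X) :=
  (e0_surj X).comp (isoA _).surjective

noncomputable def toXIso (X : OId d) : Fin (Gobj d (gapCard X)).len ≃o Fin X.len :=
  StrictMono.orderIsoOfSurjective _ (toX_strictMono X) (toX_surj X)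

lemma toX_lam (X : OId d) (j : Fin d) :
    toX X ((Gobj d (gapCard X)).lam j) = X.lam j := by
  show e0 X (isoA _ ((isoA _).symm (mrk _ j))) = _
  rw [OrderIso.apply_symm_apply]
  exact e0_mrk X j

/-- The glued object built on the gap sizes of `X` is isomorphic to `X`. -/
noncomputable def isoObj (X : OId d) : Gobj d (gapCard X) ≅ X where
  hom := ⟨OrderEmbedding.ofStrictMono _ (toX_strictMono X), toX_lam X⟩
  inv := ⟨(toXIso X).symm.toOrderEmbedding, fun j => by
    have h1 : toXIso X ((Gobj d (gapCard X)).lam j) = X.lam j := toX_lam X j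
    rw [← h1]
    exact (toXIso X).symm_apply_apply _⟩
  hom_inv_id := OId.hom_ext _ _ (fun x => (toXIso X).symm_apply_apply x)
  inv_hom_id := OId.hom_ext _ _ (fun x => (toXIso X).apply_symm_apply x)

instance : (G d).Faithful := by
  refine ⟨fun {n m} {f g} h => ?_⟩
  funext i
  apply OI.hom_ext
  intro k
  have hx := congrArg
    (fun (φ : (G d).obj n ⟶ (G d).obj m) =>
      OId.emb φ ((isoA (lenF n)).symm (gapEl (lenF n) i k))) h
  have e1f : OId.emb ((G d).map f) ((isoA (lenF n)).symm (gapEl (lenF n) i k))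
      = (isoA (lenF m)).symm (gapEl (lenF m) i (OI.emb (f i) k)) := by
    show (isoA (lenF m)).symm
      (Amap _ (isoA (lenF n) ((isoA (lenF n)).symm (gapEl (lenF n) i k)))) = _
    rw [OrderIso.apply_symm_apply]
    rfl
  have e1g : OId.emb ((G d).map g) ((isoA (lenF n)).symm (gapEl (lenF n) i k))
      = (isoA (lenF m)).symm (gapEl (lenF m) i (OI.emb (g i) k)) := by
    show (isoA (lenF m)).symm
      (Amap _ (isoA (lenF n) ((isoA (lenF n)).symm (gapEl (lenF n) i k)))) = _
    rw [OrderIso.apply_symm_apply]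
    rfl
  have hx' : OId.emb ((G d).map f) ((isoA (lenF n)).symm (gapEl (lenF n) i k))
      = OId.emb ((G d).map g) ((isoA (lenF n)).symm (gapEl (lenF n) i k)) := hx
  exact gapEl_inj ((isoA (lenF m)).symm.injective (e1f.symm.trans (hx'.trans e1g)))

instance : (G d).Full := by
  refine ⟨fun {n m} h => ?_⟩
  have spec : ∀ (i : Fin (d + 1)) (k : Fin (lenF n i)), ∃ k' : Fin (lenF m i),
      isoA (lenF m) (OId.emb h ((isoA (lenF n)).symm (gapEl (lenF n) i k)))
        = gapEl (lenF m) i k' := by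
    intro i k
    apply mem_gap
    · intro j hj
      have hlt : (Gobj d (lenF n)).lam j < (isoA (lenF n)).symm (gapEl (lenF n) i k) := by
        show (isoA (lenF n)).symm (mrk _ j) < _
        exact (isoA _).symm.strictMono (mrk_lt_gapEl.mpr hj)
      have h3 := (OId.emb h).strictMono hlt
      have h4 : OId.emb h ((Gobj d (lenF n)).lam j) = (Gobj d (lenF m)).lam j := h.2 j
      rw [h4] at h3
      exact lamG_lt_iff.mp h3
    · intro j hj
      have hlt : (isoA (lenF n)).symm (gapEl (lenF n) i k) < (Gobj d (lenF n)).lam j := by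
        show _ < (isoA (lenF n)).symm (mrk _ j)
        exact (isoA _).symm.strictMono (gapEl_lt_mrk.mpr hj)
      have h3 := (OId.emb h).strictMono hlt
      have h4 : OId.emb h ((Gobj d (lenF n)).lam j) = (Gobj d (lenF m)).lam j := h.2 j
      rw [h4] at h3
      exact lt_lamG_iff.mp h3
  choose F hF using spec
  have hFmono : ∀ i, StrictMono (F i) := by
    intro i k k2 hk
    have h1 : (isoA (lenF n)).symm (gapEl (lenF n) i k)
        < (isoA (lenF n)).symm (gapEl (lenF n) i k2) :=
      (isoA _).symm.strictMono (gapEl_lt_gapEl.mpr hk)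
    have h2 := (isoA (lenF m)).strictMono ((OId.emb h).strictMono h1)
    rw [hF i k, hF i k2] at h2
    exact gapEl_lt_gapEl.mp h2
  refine ⟨fun i => OrderEmbedding.ofStrictMono (F i) (hFmono i), ?_⟩
  apply OId.hom_ext
  intro x
  rcases A_cases (isoA (lenF n) x) with ⟨j, hj⟩ | ⟨i, k, hk⟩
  · have hx : x = (Gobj d (lenF n)).lam j := by
      show x = (isoA (lenF n)).symm (mrk _ j)
      rw [← hj]; exact ((isoA (lenF n)).symm_apply_apply x).symm
    rw [hx]
    exact (((G d).map (fun i => OrderEmbedding.ofStrictMono (F i) (hFmono i))).2 j).trans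
      (h.2 j).symm
  · have hx : x = (isoA (lenF n)).symm (gapEl (lenF n) i k) := by
      rw [← hk]; exact ((isoA (lenF n)).symm_apply_apply x).symm
    subst hx
    show (isoA (lenF m)).symm
      (Amap _ (isoA (lenF n) ((isoA (lenF n)).symm (gapEl (lenF n) i k)))) = _
    rw [OrderIso.apply_symm_apply]
    erw [show Amap (fun i => OI.emb (OrderEmbedding.ofStrictMono (F i) (hFmono i)))
        (gapEl (lenF n) i k) = gapEl (lenF m) i (F i k) from rfl]
    rw [← hF i k]; erw [OrderIso.symm_apply_apply]

instance : (G d).EssSurj :=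
  ⟨fun Y => ⟨fun i => OI.mk (gapCard Y i), ⟨isoObj Y⟩⟩⟩

instance : (G d).IsEquivalence := { }

end OIdP

/-- For every `d ≥ 0` there is an equivalence of categories `OI(d) ≃ OI^(d+1)`, sending
`(S, λ)` to the tuple `(S₁, …, S_{d+1})`, where `Sᵢ = {x ∈ S : λ_{i-1} < x < λᵢ}` (with
the conventions `λ₀ < x` and `x < λ_{d+1}` for all `x ∈ S`). -/
theorem oid_equivalence_oi_pow (d : ℕ) :
    ∃ e : OId d ≌ (Fin (d + 1) → OI),
      ∀ (X : OId d) (i : Fin (d + 1)),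
        e.functor.obj X i = OI.mk (Fintype.card
          { x : Fin X.len // (∀ j : Fin d, (j : ℕ) < (i : ℕ) → X.lam j < x) ∧
              (∀ j : Fin d, (i : ℕ) ≤ (j : ℕ) → x < X.lam j) }) := by
  refine ⟨(OIdP.G d).asEquivalence.symm, fun X i => ?_⟩
  have hiso : (OIdP.G d).obj ((OIdP.G d).asEquivalence.symm.functor.obj X) ≅ X :=
    ((OIdP.G d).asEquivalence.symm.unitIso.app X).symm
  have h1 := OIdP.card_gap (OIdP.lenF ((OIdP.G d).asEquivalence.symm.functor.obj X)) i
  have h2 := OIdP.card_gap_eq_of_iso hiso i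
  show OIdP.lenF ((OIdP.G d).asEquivalence.symm.functor.obj X) i = _
  exact h1.symm.trans h2
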